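/- For any real p with 0 < p ≤ 1 and integers m, K with 1 ≤ m ≤ K, it holds that m·(1 - (1-p)^K)/K ≤ 1 - (1-p)^m. -/

import Mathlib

theorem stmt_3 (p : ℝ) (hp0 : 0 < p) (hp1 : p ≤ 1) (m K : ℕ)
    (hm : 1 ≤ m) (hmK : m ≤ K) :
    (m : ℝ) * (1 - (1 - p) ^ K) / K ≤ 1 - (1 - p) ^ m := by
  set q : ℝ := 1 - p with hq
  have hq0 : 0 ≤ q := by linarith
  have hq1 : q ≤ 1 := by linarith
  have hKpos : 0 < (K : ℝ) := by
    exact_mod_cast Nat.lt_of_lt_of_le (Nat.lt_of_lt_of_le Nat.zero_lt_one hm) hmK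
  rw [div_le_iff₀ hKpos]
  have hgeom : ∀ n : ℕ, 1 - q ^ n = p * ∑ i ∈ Finset.range n, q ^ i := by
    intro n
    have h1 := geom_sum_mul q n
    have hqp : q - 1 = -p := by linarith
    linear_combination h1 - (∑ i ∈ Finset.range n, q ^ i) * hqp
  rw [hgeom K, hgeom m]
  have hsplit : ∑ i ∈ Finset.range K, q ^ i
      = (∑ i ∈ Finset.range m, q ^ i) + ∑ i ∈ Finset.Ico m K, q ^ i := by
    rw [Finset.range_eq_Ico, Finset.range_eq_Ico]
    exact (Finset.sum_Ico_consecutive (fun i => q ^ i) (Nat.zero_le m) hmK).symm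
  have hT : ∑ i ∈ Finset.Ico m K, q ^ i ≤ (K - m : ℕ) * q ^ m := by
    calc ∑ i ∈ Finset.Ico m K, q ^ i ≤ (Finset.Ico m K).card • q ^ m := by
          apply Finset.sum_le_card_nsmul
          intro i hi
          exact pow_le_pow_of_le_one hq0 hq1 (Finset.mem_Ico.mp hi).1
      _ = (K - m : ℕ) * q ^ m := by
          rw [Nat.card_Ico, nsmul_eq_mul]
  have hS : (m : ℝ) * q ^ m ≤ ∑ i ∈ Finset.range m, q ^ i := by
    calc (m : ℝ) * q ^ m = (Finset.range m).card • q ^ m := by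
          rw [Finset.card_range, nsmul_eq_mul]
      _ ≤ ∑ i ∈ Finset.range m, q ^ i := by
          apply Finset.card_nsmul_le_sum
          intro i hi
          exact pow_le_pow_of_le_one hq0 hq1 (Nat.le_of_lt_succ
            (Nat.lt_succ_of_lt (Finset.mem_range.mp hi))) |>.trans_eq rfl
  have hS' : (m : ℝ) * q ^ m ≤ ∑ i ∈ Finset.range m, q ^ i := hS
  have hcast : ((K - m : ℕ) : ℝ) = (K : ℝ) - m := by
    rw [Nat.cast_sub hmK]
  have hmR : (0 : ℝ) ≤ m := Nat.cast_nonneg m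
  have hkm : (0 : ℝ) ≤ (K : ℝ) - m := by
    rw [← hcast]; exact Nat.cast_nonneg _
  have key : (m : ℝ) * ∑ i ∈ Finset.range K, q ^ i
      ≤ (K : ℝ) * ∑ i ∈ Finset.range m, q ^ i := by
    rw [hsplit]
    rw [hcast] at hT
    nlinarith [mul_le_mul_of_nonneg_left hT hmR, mul_le_mul_of_nonneg_left hS hkm]
  nlinarith [mul_le_mul_of_nonneg_left key hp0.le]
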